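/- Let f be a homogeneous Darboux polynomial of degree m of the three-dimensional Lotka–Volterra system with cofactor α·x1 + β·x2 + γ·x3, and suppose γ ≠ 0 and s = 0. Then x2 divides f. -/

import Mathlib

open MvPolynomial

/-- Lie derivative along the 3D Lotka-Volterra vector field with parameters r, s, t. -/
noncomputable def LV (r s t : ℝ) (f : MvPolynomial (Fin 3) ℝ) : MvPolynomial (Fin 3) ℝ :=
  X 0 * (C r * X 1 + C s * X 2) * pderiv 0 f
  + X 1 * (C (-r) * X 0 + C t * X 2) * pderiv 1 f
  + X 2 * (C (-s) * X 0 + C (-t) * X 1) * pderiv 2 f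

/-- The substitution sending `X 1` to `0` and fixing the other variables. -/
noncomputable def subZero : MvPolynomial (Fin 3) ℝ →ₐ[ℝ] MvPolynomial (Fin 3) ℝ :=
  aeval (fun j : Fin 3 => if j = 1 then 0 else X j)

@[simp] lemma subZero_X1 : subZero (X 1) = 0 := by simp [subZero]

@[simp] lemma subZero_X0 : subZero (X 0) = X 0 := by simp [subZero]

@[simp] lemma subZero_X2 : subZero (X 2) = X 2 := by simp [subZero]

lemma subZero_fixed (g : MvPolynomial (Fin 3) ℝ)
    (h : ∀ d ∈ g.support, d 1 = 0) : subZero g = g := by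
  nth_rewrite 1 [g.as_sum]
  rw [map_sum]
  conv_rhs => rw [g.as_sum]
  refine Finset.sum_congr rfl fun d hd => ?_
  rw [monomial_eq]
  have h1 : (1 : Fin 3) ∉ d.support := by
    simp [Finsupp.mem_support_iff, h d hd]
  rw [map_mul]
  congr 1
  · simp [subZero]
  · unfold Finsupp.prod
    rw [map_prod]
    refine Finset.prod_congr rfl fun j hj => ?_
    have : j ≠ 1 := fun hj1 => h1 (hj1 ▸ hj)
    simp [subZero, this]

lemma X1_dvd_of_subZero_eq_zero (f : MvPolynomial (Fin 3) ℝ)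
    (h : subZero f = 0) : X 1 ∣ f := by
  rw [X_dvd_iff_modMonomial_eq_zero]
  set g := f.modMonomial (Finsupp.single 1 1) with hg
  have hsupp : ∀ d ∈ g.support, d 1 = 0 := by
    intro d hd
    by_contra hd1
    have hle : Finsupp.single (1 : Fin 3) 1 ≤ d := by
      rw [Finsupp.single_le_iff]
      omega
    have := coeff_modMonomial_of_le f hle
    rw [← hg] at this
    exact (Finsupp.mem_support_iff.mp hd) this
  have hfg : X 1 * (f.divMonomial (Finsupp.single 1 1)) + g = f :=
    divMonomial_add_modMonomial_single f 1
  have : subZero g = 0 := by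
    have := congrArg subZero hfg
    rw [map_add, map_mul, subZero_X1, zero_mul, zero_add, h] at this
    exact this
  rwa [subZero_fixed g hsupp] at this

theorem stmt9 (r s t : ℝ) (m : ℕ) (f : MvPolynomial (Fin 3) ℝ)
    (hhom : f.IsHomogeneous m) (α β γ : ℝ)
    (hD : LV r s t f = (C α * X 0 + C β * X 1 + C γ * X 2) * f)
    (hγ : γ ≠ 0) (hs : s = 0) :
    X 1 ∣ f := by
  subst hs
  have hLV : LV r 0 t f = X 1 * (X 0 * C r * pderiv 0 f
      + (C (-r) * X 0 + C t * X 2) * pderiv 1 f + X 2 * C (-t) * pderiv 2 f) := by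
    unfold LV
    rw [neg_zero, C_0]
    ring
  have h0 : (C α * X 0 + C γ * X 2) * subZero f = 0 := by
    have := congrArg subZero hD
    rw [hLV, map_mul, subZero_X1, zero_mul] at this
    rw [map_mul, map_add, map_add, map_mul, map_mul, map_mul] at this
    simp only [subZero_X0, subZero_X1, subZero_X2, mul_zero, add_zero] at this
    have hC : ∀ c : ℝ, subZero (C c) = C c := fun c => by simp [subZero]
    rw [hC, hC] at this
    exact this.symm
  have hne : (C α * X 0 + C γ * X 2 : MvPolynomial (Fin 3) ℝ) ≠ 0 := by
    intro hcontra
    have := congrArg (coeff (Finsupp.single 2 1)) hcontra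
    simp [coeff_add, coeff_C_mul, coeff_X] at this
    have h02 : (Finsupp.single (0 : Fin 3) 1 : Fin 3 →₀ ℕ) ≠ Finsupp.single 2 1 := by
      intro h
      have h' := congrArg (fun g : Fin 3 →₀ ℕ => g 0) h
      simp at h'
    rw [if_neg h02, zero_add] at this
    exact hγ this
  have hf0 : subZero f = 0 := by
    rcases mul_eq_zero.mp h0 with h | h
    · exact absurd h hne
    · exact h
  exact X1_dvd_of_subZero_eq_zero f hf0
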